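/- The group of permutations of P¹(F_9) generated by the maps z ↦ (Az+B)/(Cz+D) with AD−BC a square in F_9* and z ↦ (A₁z³+B₁)/(C₁z³+D₁) with A₁D₁−B₁C₁ a non-square has order 8·9·10 = 720 and acts 3-transitively on the 10 points of P¹(F_9). -/

import Mathlib

open scoped Classical

/-- The fractional linear map `z ↦ (Az+B)/(Cz+D)` on the projective line over `F_9`,
realized as `Option (GaloisField 3 2)` with `none` playing the role of `∞`. -/
noncomputable def moebius (A B C D : GaloisField 3 2) :
    Option (GaloisField 3 2) → Option (GaloisField 3 2)
  | none => if C = 0 then none else some (A / C)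
  | some z => if C * z + D = 0 then none else some ((A * z + B) / (C * z + D))

/-- The twisted map `z ↦ (A₁z³+B₁)/(C₁z³+D₁)` on `P¹(F_9)`, where `z ↦ z³` is the
Frobenius automorphism of `F_9`. -/
noncomputable def moebiusFrob (A B C D : GaloisField 3 2) :
    Option (GaloisField 3 2) → Option (GaloisField 3 2)
  | none => if C = 0 then none else some (A / C)
  | some z => if C * z ^ 3 + D = 0 then none else some ((A * z ^ 3 + B) / (C * z ^ 3 + D))

/-- The permutations of `P¹(F_9)` which are fractional linear maps with square
determinant, together with the Frobenius-twisted fractional linear maps with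
non-square determinant. -/
def mTenMaps : Set (Equiv.Perm (Option (GaloisField 3 2))) :=
  {f | (∃ A B C D : GaloisField 3 2,
          (A * D - B * C ≠ 0 ∧ IsSquare (A * D - B * C)) ∧ ∀ x, f x = moebius A B C D x) ∨
       (∃ A B C D : GaloisField 3 2,
          (A * D - B * C ≠ 0 ∧ ¬ IsSquare (A * D - B * C)) ∧
            ∀ x, f x = moebiusFrob A B C D x)}

def IsMultiplyTransitive {X : Type*} (G : Subgroup (Equiv.Perm X)) (k : ℕ) : Prop :=
  ∀ v w : Fin k → X, Function.Injective v → Function.Injective w →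
    ∃ g ∈ G, ∀ i, g (v i) = w i

namespace M10Aux

local notation "F9" => GaloisField 3 2

noncomputable instance : Fintype (GaloisField 3 2) := Fintype.ofFinite _

lemma card_F9 : Fintype.card (GaloisField 3 2) = 9 := by
  rw [← Nat.card_eq_fintype_card]; exact GaloisField.card 3 2 (by norm_num)

lemma pow_nine (x : F9) : x ^ 9 = x := by
  have := FiniteField.pow_card x
  rwa [card_F9] at this

lemma cube_cube (x : F9) : (x ^ 3) ^ 3 = x := by rw [← pow_mul]; exact pow_nine x

lemma add_cube (x y : F9) : (x + y) ^ 3 = x ^ 3 + y ^ 3 := add_pow_char _ _ _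

lemma sub_cube (x y : F9) : (x - y) ^ 3 = x ^ 3 - y ^ 3 := sub_pow_char _ _

lemma mb_none (A B C D : F9) : moebius A B C D none = if C = 0 then none else some (A / C) := rfl
lemma mb_some (A B C D z : F9) : moebius A B C D (some z) =
    if C * z + D = 0 then none else some ((A * z + B) / (C * z + D)) := rfl

/-! ### Squares -/

lemma ringChar_ne_two : ringChar (GaloisField 3 2) ≠ 2 := by
  rw [ringChar.eq _ 3]; norm_num

lemma isSquare_cube_iff {x : F9} : IsSquare (x ^ 3) ↔ IsSquare x := by
  constructor
  · rintro ⟨s, hs⟩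
    by_cases hx : x = 0
    · exact ⟨0, by rw [hx, mul_zero]⟩
    · refine ⟨s * x⁻¹, ?_⟩
      field_simp
      linear_combination hs
  · rintro ⟨s, hs⟩
    exact ⟨s ^ 3, by rw [hs]; ring⟩

lemma nonsq_mul_nonsq {a b : F9} (ha : a ≠ 0) (hb : b ≠ 0)
    (ha' : ¬ IsSquare a) (hb' : ¬ IsSquare b) : IsSquare (a * b) := by
  have hsa := FiniteField.isSquare_iff ringChar_ne_two ha
  have hsb := FiniteField.isSquare_iff ringChar_ne_two hb
  rw [FiniteField.isSquare_iff ringChar_ne_two (mul_ne_zero ha hb), mul_pow]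
  rcases FiniteField.pow_dichotomy ringChar_ne_two ha with h | h
  · exact absurd (hsa.mpr h) ha'
  rcases FiniteField.pow_dichotomy ringChar_ne_two hb with h' | h'
  · exact absurd (hsb.mpr h') hb'
  rw [h, h', neg_mul_neg, one_mul]

lemma sq_mul_nonsq {a b : F9} (ha0 : a ≠ 0) (ha : IsSquare a) (hb : ¬ IsSquare b) :
    ¬ IsSquare (a * b) := by
  rintro ⟨t, ht⟩
  obtain ⟨s, hs⟩ := ha
  have hs0 : s ≠ 0 := by rintro rfl; exact ha0 (by rw [hs, mul_zero])
  refine hb ⟨t / s, ?_⟩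
  field_simp
  linear_combination ht - b * hs

lemma nonsq_mul_sq {a b : F9} (hb0 : b ≠ 0) (ha : ¬ IsSquare a) (hb : IsSquare b) :
    ¬ IsSquare (a * b) := by
  rw [mul_comm]; exact sq_mul_nonsq hb0 hb ha

/-! ### Composition -/

lemma mb_comp (A B C D A' B' C' D' : F9) (h2 : A' * D' - B' * C' ≠ 0) :
    ∀ x, moebius A B C D (moebius A' B' C' D' x) =
      moebius (A * A' + B * C') (A * B' + B * D') (C * A' + D * C') (C * B' + D * D') x := by
  intro x
  cases x with
  | none =>
    rw [mb_none, mb_none]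
    by_cases hC' : C' = 0
    · have hA' : A' ≠ 0 := by intro h; exact h2 (by rw [h, hC']; ring)
      rw [if_pos hC', mb_none, hC']
      by_cases hC : C = 0
      · rw [if_pos hC, if_pos (by rw [hC]; ring)]
      · rw [if_neg hC, if_neg (by simpa [hA'] using hC)]
        simp only [mul_zero, add_zero]
        rw [mul_div_mul_right A C hA']
    · rw [if_neg hC', mb_some]
      have hden : C * (A' / C') + D = (C * A' + D * C') / C' := by field_simp
      by_cases hE : C * A' + D * C' = 0
      · rw [if_pos (by rw [hden, hE, zero_div]), if_pos hE]
      · rw [if_neg (by rw [hden]; exact div_ne_zero hE hC'), if_neg hE]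
        congr 1
        rw [hden]
        have hnum : A * (A' / C') + B = (A * A' + B * C') / C' := by field_simp
        rw [hnum, div_div_div_cancel_right₀ hC']
  | some z =>
    rw [mb_some, mb_some]
    by_cases hd2 : C' * z + D' = 0
    · have hne : A' * z + B' ≠ 0 := by
        intro h; exact h2 (by linear_combination A' * hd2 - C' * h)
      rw [if_pos hd2, mb_none]
      have key : (C * A' + D * C') * z + (C * B' + D * D') = C * (A' * z + B') := by
        linear_combination D * hd2
      have keyn : (A * A' + B * C') * z + (A * B' + B * D') = A * (A' * z + B') := by
        linear_combination B * hd2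
      by_cases hC : C = 0
      · rw [if_pos hC, if_pos (by rw [key, hC, zero_mul])]
      · rw [if_neg hC, if_neg (by rw [key]; exact mul_ne_zero hC hne)]
        rw [key, keyn, mul_comm A _, mul_comm C _, mul_div_mul_left _ _ hne]
    · rw [if_neg hd2]
      have hden : C * ((A' * z + B') / (C' * z + D')) + D
          = ((C * A' + D * C') * z + (C * B' + D * D')) / (C' * z + D') := by
        rw [mul_div_assoc', div_add' _ _ _ hd2]; congr 1; ring
      have hnum : A * ((A' * z + B') / (C' * z + D')) + B
          = ((A * A' + B * C') * z + (A * B' + B * D')) / (C' * z + D') := by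
        rw [mul_div_assoc', div_add' _ _ _ hd2]; congr 1; ring
      rw [mb_some]
      by_cases hE : (C * A' + D * C') * z + (C * B' + D * D') = 0
      · rw [if_pos (by rw [hden, hE, zero_div]), if_pos hE]
      · rw [if_neg (by rw [hden]; exact div_ne_zero hE hd2), if_neg hE]
        rw [hden, hnum, div_div_div_cancel_right₀ hd2]

/-! ### Frobenius -/

noncomputable def frobO : Option F9 → Option F9 := Option.map (· ^ 3)

lemma mbf_eq (A B C D : F9) (x : Option F9) :
    moebiusFrob A B C D x = moebius A B C D (frobO x) := by
  cases x <;> rfl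

lemma frobO_frobO (x : Option F9) : frobO (frobO x) = x := by
  cases x <;> simp [frobO, cube_cube]

lemma frobO_mb (A B C D : F9) (x : Option F9) :
    frobO (moebius A B C D x) = moebius (A^3) (B^3) (C^3) (D^3) (frobO x) := by
  have cube_eq_zero : ∀ u : F9, u ^ 3 = 0 ↔ u = 0 := fun u =>
    pow_eq_zero_iff (by norm_num)
  cases x with
  | none =>
    rw [mb_none]
    by_cases hC : C = 0
    · simp [hC, frobO, mb_none]
    · simp only [frobO, if_neg hC, Option.map_some]
      show _ = moebius (A ^ 3) (B ^ 3) (C ^ 3) (D ^ 3) none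
      rw [mb_none, if_neg (fun h => hC ((cube_eq_zero C).mp h)), div_pow]
  | some z =>
    rw [mb_some]
    have key : (C * z + D) ^ 3 = C^3 * z^3 + D^3 := by
      rw [add_cube, mul_pow]
    have keyn : (A * z + B) ^ 3 = A^3 * z^3 + B^3 := by
      rw [add_cube, mul_pow]
    have hfz : frobO (some z) = some (z ^ 3) := rfl
    rw [hfz, mb_some]
    by_cases hd : C * z + D = 0
    · rw [if_pos hd, if_pos (by rw [← key, hd]; ring)]
      rfl
    · rw [if_neg hd, if_neg (by rw [← key]; exact fun h => hd ((cube_eq_zero _).mp h))]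
      simp only [frobO, Option.map_some]
      rw [div_pow, key, keyn]

lemma mb_scale (k : F9) (hk : k ≠ 0) (x : Option F9) : moebius k 0 0 k x = x := by
  cases x with
  | none => rw [mb_none, if_pos rfl]
  | some z =>
    rw [mb_some, zero_mul, zero_add, if_neg hk]
    congr 1
    rw [add_zero, mul_comm, mul_div_assoc, div_self hk, mul_one]

lemma mb_adj (A B C D : F9) (h : A * D - B * C ≠ 0) (x : Option F9) :
    moebius D (-B) (-C) A (moebius A B C D x) = x := by
  rw [mb_comp D (-B) (-C) A A B C D h x,
    show D * A + -B * C = A * D - B * C from by ring,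
    show D * B + -B * D = 0 from by ring,
    show -C * A + A * C = 0 from by ring,
    show -C * B + A * D = A * D - B * C from by ring]
  exact mb_scale _ h x

lemma mb_adj' (A B C D : F9) (h : A * D - B * C ≠ 0) (x : Option F9) :
    moebius A B C D (moebius D (-B) (-C) A x) = x := by
  rw [mb_comp A B C D D (-B) (-C) A (by rw [show D * A - -B * -C = A * D - B * C from by ring]; exact h) x,
    show A * D + B * -C = A * D - B * C from by ring,
    show A * -B + B * A = 0 from by ring,
    show C * D + D * -C = 0 from by ring,
    show C * -B + D * A = A * D - B * C from by ring]
  exact mb_scale _ h x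

lemma mbf_adj' (A B C D : F9) (h : A * D - B * C ≠ 0) (x : Option F9) :
    moebiusFrob A B C D (moebiusFrob (D^3) (-(B^3)) (-(C^3)) (A^3) x) = x := by
  rw [mbf_eq, mbf_eq, frobO_mb, frobO_frobO,
    show ((D:F9)^3)^3 = D from cube_cube D,
    show (-(B^3):F9)^3 = -B from by rw [Odd.neg_pow (by decide), cube_cube],
    show (-(C^3):F9)^3 = -C from by rw [Odd.neg_pow (by decide), cube_cube],
    show ((A:F9)^3)^3 = A from cube_cube A]
  exact mb_adj' A B C D h x

/-! ### Permutations -/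

noncomputable def mbPerm (A B C D : F9) (h : A * D - B * C ≠ 0) :
    Equiv.Perm (Option F9) where
  toFun := moebius A B C D
  invFun := moebius D (-B) (-C) A
  left_inv := mb_adj A B C D h
  right_inv := mb_adj' A B C D h

lemma mbPerm_apply (A B C D : F9) (h : A * D - B * C ≠ 0) (x : Option F9) :
    mbPerm A B C D h x = moebius A B C D x := rfl

noncomputable def frobPerm : Equiv.Perm (Option F9) :=
  ⟨frobO, frobO, frobO_frobO, frobO_frobO⟩

noncomputable def mbfPerm (A B C D : F9) (h : A * D - B * C ≠ 0) :
    Equiv.Perm (Option F9) :=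
  frobPerm.trans (mbPerm A B C D h)

lemma mbfPerm_apply (A B C D : F9) (h : A * D - B * C ≠ 0) (x : Option F9) :
    mbfPerm A B C D h x = moebiusFrob A B C D x := (mbf_eq A B C D x).symm

/-! ### The subgroup -/

lemma det_mul (A B C D A' B' C' D' : F9) :
    (A * A' + B * C') * (C * B' + D * D') - (A * B' + B * D') * (C * A' + D * C')
      = (A * D - B * C) * (A' * D' - B' * C') := by ring

lemma det_cube (A B C D : F9) :
    A^3 * D^3 - B^3 * C^3 = (A * D - B * C) ^ 3 := by
  rw [sub_cube]; ring

noncomputable def M10 : Subgroup (Equiv.Perm (Option F9)) where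
  carrier := mTenMaps
  one_mem' := Or.inl ⟨1, 0, 0, 1, ⟨by norm_num, ⟨1, by ring⟩⟩,
    fun x => by rw [Equiv.Perm.one_apply]; exact (mb_scale 1 one_ne_zero x).symm⟩
  mul_mem' := by
    rintro a b (⟨A,B,C,D,⟨hd1,hs1⟩,hf⟩ | ⟨A,B,C,D,⟨hd1,hs1⟩,hf⟩)
      (⟨A',B',C',D',⟨hd2,hs2⟩,hg⟩ | ⟨A',B',C',D',⟨hd2,hs2⟩,hg⟩)
    · refine Or.inl ⟨A*A'+B*C', A*B'+B*D', C*A'+D*C', C*B'+D*D',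
        ⟨by rw [det_mul]; exact mul_ne_zero hd1 hd2,
         by rw [det_mul]; exact hs1.mul hs2⟩, fun x => ?_⟩
      rw [Equiv.Perm.mul_apply, hf, hg, mb_comp A B C D A' B' C' D' hd2 x]
    · refine Or.inr ⟨A*A'+B*C', A*B'+B*D', C*A'+D*C', C*B'+D*D',
        ⟨by rw [det_mul]; exact mul_ne_zero hd1 hd2,
         by rw [det_mul]; exact sq_mul_nonsq hd1 hs1 hs2⟩, fun x => ?_⟩
      rw [Equiv.Perm.mul_apply, hf, hg, mbf_eq, mbf_eq, mb_comp A B C D A' B' C' D' hd2]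
    · have hd2c : A'^3 * D'^3 - B'^3 * C'^3 ≠ 0 := by
        rw [det_cube]; exact pow_ne_zero _ hd2
      refine Or.inr ⟨A*A'^3+B*C'^3, A*B'^3+B*D'^3, C*A'^3+D*C'^3, C*B'^3+D*D'^3,
        ⟨by rw [det_mul, det_cube]; exact mul_ne_zero hd1 (pow_ne_zero _ hd2),
         by rw [det_mul, det_cube];
            exact nonsq_mul_sq (pow_ne_zero _ hd2) hs1 (isSquare_cube_iff.mpr hs2)⟩,
        fun x => ?_⟩
      rw [Equiv.Perm.mul_apply, hf, hg, mbf_eq, mbf_eq, frobO_mb,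
        mb_comp A B C D (A'^3) (B'^3) (C'^3) (D'^3) hd2c]
    · have hd2c : A'^3 * D'^3 - B'^3 * C'^3 ≠ 0 := by
        rw [det_cube]; exact pow_ne_zero _ hd2
      refine Or.inl ⟨A*A'^3+B*C'^3, A*B'^3+B*D'^3, C*A'^3+D*C'^3, C*B'^3+D*D'^3,
        ⟨by rw [det_mul, det_cube]; exact mul_ne_zero hd1 (pow_ne_zero _ hd2),
         by rw [det_mul, det_cube];
            exact nonsq_mul_nonsq hd1 (pow_ne_zero _ hd2) hs1
              (fun h => hs2 (isSquare_cube_iff.mp h))⟩,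
        fun x => ?_⟩
      rw [Equiv.Perm.mul_apply, hf, hg, mbf_eq, mbf_eq, frobO_mb, frobO_frobO,
        mb_comp A B C D (A'^3) (B'^3) (C'^3) (D'^3) hd2c]
  inv_mem' := by
    rintro a (⟨A,B,C,D,⟨hd,hs⟩,hf⟩ | ⟨A,B,C,D,⟨hd,hs⟩,hf⟩)
    · refine Or.inl ⟨D, -B, -C, A,
        ⟨by rw [show D * A - -B * -C = A * D - B * C from by ring]; exact hd,
         by rw [show D * A - -B * -C = A * D - B * C from by ring]; exact hs⟩, fun x => ?_⟩
      have h1 : a (moebius D (-B) (-C) A x) = x := by rw [hf]; exact mb_adj' A B C D hd x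
      calc a⁻¹ x = a⁻¹ (a (moebius D (-B) (-C) A x)) := by rw [h1]
      _ = moebius D (-B) (-C) A x := Equiv.symm_apply_apply a _
    · have hdet : D^3 * A^3 - -(B^3) * -(C^3) = (A * D - B * C) ^ 3 := by
        rw [sub_cube]; ring
      refine Or.inr ⟨D^3, -(B^3), -(C^3), A^3,
        ⟨by rw [hdet]; exact pow_ne_zero _ hd,
         by rw [hdet]; exact fun h => hs (isSquare_cube_iff.mp h)⟩, fun x => ?_⟩
      have h1 : a (moebiusFrob (D^3) (-(B^3)) (-(C^3)) (A^3) x) = x := by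
        rw [hf]; exact mbf_adj' A B C D hd x
      calc a⁻¹ x = a⁻¹ (a (moebiusFrob (D^3) (-(B^3)) (-(C^3)) (A^3) x)) := by rw [h1]
      _ = moebiusFrob (D^3) (-(B^3)) (-(C^3)) (A^3) x := Equiv.symm_apply_apply a _

lemma closure_eq : Subgroup.closure mTenMaps = M10 := Subgroup.closure_eq M10

/-! ### Existence: mapping the base triple anywhere -/

lemma exists_base {a b c : Option F9} (hab : a ≠ b) (hac : a ≠ c) (hbc : b ≠ c) :
    ∃ A B C D : F9, A * D - B * C ≠ 0 ∧ moebius A B C D none = a ∧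
      moebius A B C D (some 0) = b ∧ moebius A B C D (some 1) = c := by
  match a, b, c with
  | none, none, _ => exact absurd rfl hab
  | none, some b', none => exact absurd rfl hac
  | some _, none, none => exact absurd rfl hbc
  | none, some b', some c' =>
    have h : c' - b' ≠ 0 := sub_ne_zero.mpr fun h => hbc (by rw [h])
    refine ⟨c' - b', b', 0, 1, by simpa using h, ?_, ?_, ?_⟩
    · rw [mb_none, if_pos rfl]
    · rw [mb_some, if_neg (by norm_num)]
      congr 1
      rw [show (c' - b') * 0 + b' = b' from by ring, show (0:F9) * 0 + 1 = 1 from by ring,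
        div_one]
    · rw [mb_some, if_neg (by norm_num)]
      congr 1
      rw [show (c' - b') * 1 + b' = c' from by ring, show (0:F9) * 1 + 1 = 1 from by ring,
        div_one]
  | some a', none, some c' =>
    have h : c' - a' ≠ 0 := sub_ne_zero.mpr fun h => hac (by rw [h])
    refine ⟨a', c' - a', 1, 0, by simpa using fun hh => h (by linear_combination -hh), ?_, ?_, ?_⟩
    · rw [mb_none, if_neg one_ne_zero, div_one]
    · rw [mb_some, if_pos (by ring)]
    · rw [mb_some, if_neg (by norm_num)]
      congr 1
      rw [show a' * 1 + (c' - a') = c' from by ring, show (1:F9) * 1 + 0 = 1 from by ring,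
        div_one]
  | some a', some b', none =>
    have h : b' - a' ≠ 0 := sub_ne_zero.mpr fun h => hab (by rw [h])
    refine ⟨a', -b', 1, -1, by rw [show a' * -1 - -b' * 1 = b' - a' from by ring]; exact h, ?_, ?_, ?_⟩
    · rw [mb_none, if_neg one_ne_zero, div_one]
    · rw [mb_some, if_neg (by norm_num)]
      congr 1
      rw [show a' * 0 + -b' = -b' from by ring, show (1:F9) * 0 + -1 = -1 from by ring,
        neg_div_neg_eq, div_one]
    · rw [mb_some, if_pos (by ring)]
  | some a', some b', some c' =>
    have hab' : a' - b' ≠ 0 := sub_ne_zero.mpr fun h => hab (by rw [h])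
    have hac' : a' - c' ≠ 0 := sub_ne_zero.mpr fun h => hac (by rw [h])
    have hbc' : c' - b' ≠ 0 := sub_ne_zero.mpr fun h => hbc (by rw [h.symm])
    refine ⟨a' * (c' - b'), b' * (a' - c'), c' - b', a' - c', ?_, ?_, ?_, ?_⟩
    · rw [show a' * (c' - b') * (a' - c') - b' * (a' - c') * (c' - b')
          = (c' - b') * ((a' - c') * (a' - b')) from by ring]
      exact mul_ne_zero hbc' (mul_ne_zero hac' hab')
    · rw [mb_none, if_neg hbc']
      congr 1
      rw [mul_div_assoc, div_self hbc', mul_one]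
    · rw [mb_some, if_neg (by rw [show (c' - b') * 0 + (a' - c') = a' - c' from by ring]; exact hac')]
      congr 1
      rw [show a' * (c' - b') * 0 + b' * (a' - c') = b' * (a' - c') from by ring,
        show (c' - b') * 0 + (a' - c') = a' - c' from by ring,
        mul_div_assoc, div_self hac', mul_one]
    · rw [mb_some, if_neg (by rw [show (c' - b') * 1 + (a' - c') = a' - b' from by ring]; exact hab')]
      congr 1
      rw [show a' * (c' - b') * 1 + b' * (a' - c') = c' * (a' - b') from by ring,
        show (c' - b') * 1 + (a' - c') = a' - b' from by ring,
        mul_div_assoc, div_self hab', mul_one]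

lemma exists_mem_base {a b c : Option F9} (hab : a ≠ b) (hac : a ≠ c) (hbc : b ≠ c) :
    ∃ g : Equiv.Perm (Option F9), g ∈ M10 ∧ g none = a ∧ g (some 0) = b ∧ g (some 1) = c := by
  obtain ⟨A, B, C, D, hd, h1, h2, h3⟩ := exists_base hab hac hbc
  by_cases hs : IsSquare (A * D - B * C)
  · exact ⟨mbPerm A B C D hd, Or.inl ⟨A, B, C, D, ⟨hd, hs⟩, fun x => rfl⟩, h1, h2, h3⟩
  · refine ⟨mbfPerm A B C D hd,
      Or.inr ⟨A, B, C, D, ⟨hd, hs⟩, fun x => mbfPerm_apply A B C D hd x⟩, ?_, ?_, ?_⟩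
    · rw [mbfPerm_apply, mbf_eq, show frobO none = none from rfl, h1]
    · rw [mbfPerm_apply, mbf_eq, show frobO (some 0) = some 0 from by simp [frobO], h2]
    · rw [mbfPerm_apply, mbf_eq, show frobO (some 1) = some 1 from by simp [frobO], h3]

/-! ### Sharpness -/

lemma fix_base_eq_one (g : Equiv.Perm (Option F9)) (hg : g ∈ M10)
    (h0 : g none = none) (h1 : g (some 0) = some 0) (h2 : g (some 1) = some 1) : g = 1 := by
  rcases hg with ⟨A, B, C, D, ⟨hd, hs⟩, hf⟩ | ⟨A, B, C, D, ⟨hd, hs⟩, hf⟩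
  · have hC : C = 0 := by
      by_contra hC
      rw [hf none, mb_none, if_neg hC] at h0
      exact Option.some_ne_none _ h0
    have hD : D ≠ 0 := fun h => hd (by rw [hC, h]; ring)
    have hB : B = 0 := by
      have h1' := h1
      rw [hf, mb_some, hC, if_neg (by rw [zero_mul, zero_add]; exact hD)] at h1'
      have := Option.some.inj h1'
      rw [zero_mul, zero_add, mul_zero, zero_add, div_eq_iff hD, zero_mul] at this
      exact this
    have hA : A = D := by
      have h2' := h2
      rw [hf, mb_some, hC, hB, if_neg (by rw [zero_mul, zero_add]; exact hD)] at h2'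
      have := Option.some.inj h2'
      rw [zero_mul, zero_add, mul_one, add_zero, div_eq_one_iff_eq hD] at this
      exact this
    have hA0 : A ≠ 0 := fun h => hd (by rw [h, hB, hC]; ring)
    refine Equiv.ext fun x => ?_
    rw [hf x, hC, hB, ← hA, Equiv.Perm.one_apply]
    exact mb_scale A hA0 x
  · have hC : C = 0 := by
      by_contra hC
      rw [hf none, show moebiusFrob A B C D none = if C = 0 then none else some (A / C) from rfl,
        if_neg hC] at h0
      exact Option.some_ne_none _ h0
    have hD : D ≠ 0 := fun h => hd (by rw [hC, h]; ring)
    have hB : B = 0 := by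
      have h1' := h1
      rw [hf, mbf_eq, show frobO (some 0) = some 0 from by simp [frobO], mb_some, hC,
        if_neg (by rw [zero_mul, zero_add]; exact hD)] at h1'
      have := Option.some.inj h1'
      rw [zero_mul, zero_add, mul_zero, zero_add, div_eq_iff hD, zero_mul] at this
      exact this
    have hA : A = D := by
      have h2' := h2
      rw [hf, mbf_eq, show frobO (some 1) = some 1 from by simp [frobO], mb_some, hC, hB,
        if_neg (by rw [zero_mul, zero_add]; exact hD)] at h2'
      have := Option.some.inj h2'
      rw [zero_mul, zero_add, mul_one, add_zero, div_eq_one_iff_eq hD] at this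
      exact this
    exact absurd ⟨A, by rw [hB, hC, ← hA]; ring⟩ hs

/-! ### Cardinality -/

lemma base_inj : Function.Injective (![none, some 0, some 1] : Fin 3 → Option F9) := by
  intro i j hij
  fin_cases i <;> fin_cases j <;> simp_all

noncomputable def evalMap (g : M10) : Fin 3 ↪ Option F9 :=
  ⟨fun i => g.1 (![none, some 0, some 1] i), g.1.injective.comp base_inj⟩

lemma evalMap_bij : Function.Bijective evalMap := by
  constructor
  · intro g h hgh
    have e : ∀ i : Fin 3, g.1 (![none, some 0, some 1] i) = h.1 (![none, some 0, some 1] i) :=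
      fun i => congrFun (congrArg (fun (e : Fin 3 ↪ Option F9) => (e : Fin 3 → Option F9)) hgh) i
    have e0 := e 0; have e1 := e 1; have e2 := e 2
    simp only [Matrix.cons_val_zero, Matrix.cons_val_one, Matrix.head_cons,
      Matrix.cons_val_two, Matrix.tail_cons] at e0 e1 e2
    have hk : (h.1⁻¹ * g.1) = 1 := by
      refine fix_base_eq_one _ (M10.mul_mem (M10.inv_mem h.2) g.2) ?_ ?_ ?_
      · rw [Equiv.Perm.mul_apply, e0, Equiv.Perm.inv_def, Equiv.symm_apply_apply]
      · rw [Equiv.Perm.mul_apply, e1, Equiv.Perm.inv_def, Equiv.symm_apply_apply]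
      · rw [Equiv.Perm.mul_apply, e2, Equiv.Perm.inv_def, Equiv.symm_apply_apply]
    have : g.1 = h.1 := by
      have := inv_mul_eq_one.mp hk
      exact this.symm
    exact Subtype.ext this
  · intro t
    have h01 : t 0 ≠ t 1 := t.injective.ne (by decide)
    have h02 : t 0 ≠ t 2 := t.injective.ne (by decide)
    have h12 : t 1 ≠ t 2 := t.injective.ne (by decide)
    obtain ⟨g, hg, e0, e1, e2⟩ := exists_mem_base h01 h02 h12
    refine ⟨⟨g, hg⟩, ?_⟩
    ext i
    fin_cases i <;> simp [evalMap, e0, e1, e2]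

lemma card_M10 : Nat.card M10 = 720 := by
  rw [Nat.card_eq_of_bijective evalMap evalMap_bij, Nat.card_eq_fintype_card,
    Fintype.card_embedding_eq, Fintype.card_option, card_F9, Fintype.card_fin]
  decide

end M10Aux

/-- The group generated by the maps `z ↦ (Az+B)/(Cz+D)` with `AD−BC` a square in `F_9*`
and the maps `z ↦ (A₁z³+B₁)/(C₁z³+D₁)` with `A₁D₁−B₁C₁` a non-square has order
`8·9·10 = 720` and acts 3-transitively on the 10 points of `P¹(F_9)`. -/
theorem m10_order_and_three_transitive :
    Nat.card (Subgroup.closure mTenMaps) = 720 ∧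
      IsMultiplyTransitive (Subgroup.closure mTenMaps) 3 := by
  constructor
  · rw [M10Aux.closure_eq]; exact M10Aux.card_M10
  · intro v w hv hw
    rw [M10Aux.closure_eq]
    obtain ⟨gv, hgv, hv0, hv1, hv2⟩ :=
      M10Aux.exists_mem_base (hv.ne (by decide : (0 : Fin 3) ≠ 1))
        (hv.ne (by decide : (0 : Fin 3) ≠ 2)) (hv.ne (by decide : (1 : Fin 3) ≠ 2))
    obtain ⟨gw, hgw, hw0, hw1, hw2⟩ :=
      M10Aux.exists_mem_base (hw.ne (by decide : (0 : Fin 3) ≠ 1))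
        (hw.ne (by decide : (0 : Fin 3) ≠ 2)) (hw.ne (by decide : (1 : Fin 3) ≠ 2))
    refine ⟨gw * gv⁻¹, M10Aux.M10.mul_mem hgw (M10Aux.M10.inv_mem hgv), fun i => ?_⟩
    fin_cases i
    · show (gw * gv⁻¹) (v 0) = w 0
      rw [show v 0 = gv none from hv0.symm]
      rw [Equiv.Perm.mul_apply, Equiv.Perm.inv_def, Equiv.symm_apply_apply, hw0]
    · show (gw * gv⁻¹) (v 1) = w 1
      rw [show v 1 = gv (some 0) from hv1.symm]
      rw [Equiv.Perm.mul_apply, Equiv.Perm.inv_def, Equiv.symm_apply_apply, hw1]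
    · show (gw * gv⁻¹) (v 2) = w 2
      rw [show v 2 = gv (some 1) from hv2.symm]
      rw [Equiv.Perm.mul_apply, Equiv.Perm.inv_def, Equiv.symm_apply_apply, hw2]
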